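/- Let a be a function assigning to every prime p an integer a_p with a_p² < 4p, and for each prime p let r_p and m_p be the unique positive integers with m_p squarefree and 4p − a_p² = r_p²·m_p. Let b be a function assigning to every prime p a positive integer b_p with b_p dividing r_p. Assume: (i) there exists a constant C > 0 such that for all real x ≥ 2 and all positive integers n, #{p prime ≤ x : n divides b_p} ≤ C·(x/(n³·log x) + √x·log(n·x)); and (ii) for every ε > 0 there exists a constant C_ε > 0 such that for all real x ≥ 2 and all real y with 1 ≤ y ≤ 2√x, Σ_{m squarefree, 1 ≤ m ≤ 4x/y²} #{p prime ≤ x : m·(4p − a_p²) is a perfect square} ≤ C_ε·x^{13/7 + ε}/y^{13/7}. Then for every function f : ℝ → ℝ that is positive-valued with f(x) → ∞ as x → ∞, one has #{p prime ≤ x : b_p² > f(p)} = o(x/log x) as x → ∞. -/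
import Mathlib


open Filter

open scoped Classical

private lemma aux_log_ge_one {x : ℝ} (hx : 3 ≤ x) : 1 ≤ Real.log x := by
  rw [Real.le_log_iff_exp_le (by linarith)]
  calc Real.exp 1 ≤ 2.7182818286 := Real.exp_one_lt_d9.le
    _ ≤ x := by linarith

private lemma aux_rpow_log_lo {β : ℝ} (hβ : β < 1) :
    (fun x : ℝ => x ^ β * Real.log x) =o[atTop] (fun x : ℝ => x / Real.log x) := by
  have hr : (0:ℝ) < (1 - β) / 2 := by linarith
  have hlog := isLittleO_log_rpow_atTop hr
  have hsq : (fun x : ℝ => Real.log x * Real.log x) =o[atTop]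
      (fun x : ℝ => x ^ (1 - β)) := by
    refine (hlog.mul hlog).congr' EventuallyEq.rfl ?_
    filter_upwards [eventually_gt_atTop (0:ℝ)] with x hx
    rw [← Real.rpow_add hx]
    norm_num
  have hmain : (fun x : ℝ => x ^ β * (Real.log x * Real.log x)) =o[atTop]
      (fun x : ℝ => x) := by
    have h := (Asymptotics.isBigO_refl (fun x : ℝ => x ^ β) atTop).mul_isLittleO hsq
    refine h.congr' EventuallyEq.rfl ?_
    filter_upwards [eventually_gt_atTop (0:ℝ)] with x hx
    rw [← Real.rpow_add hx]
    norm_num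
  rw [Asymptotics.isLittleO_iff] at hmain ⊢
  intro c hc
  filter_upwards [hmain hc, eventually_ge_atTop (3:ℝ)] with x h1 hx3
  have hx0 : (0:ℝ) < x := by linarith
  have hL : (1:ℝ) ≤ Real.log x := aux_log_ge_one hx3
  have hL0 : (0:ℝ) < Real.log x := by linarith
  have hb0 : (0:ℝ) ≤ x ^ β := (Real.rpow_pos_of_pos hx0 β).le
  rw [Real.norm_eq_abs, Real.norm_eq_abs, abs_of_nonneg (by positivity),
    abs_of_nonneg (by positivity)]
  rw [Real.norm_eq_abs, Real.norm_eq_abs, abs_of_nonneg (by positivity),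
    abs_of_nonneg hx0.le] at h1
  rw [show c * (x / Real.log x) = c * x / Real.log x by ring, le_div_iff₀ hL0]
  calc x ^ β * Real.log x * Real.log x = x ^ β * (Real.log x * Real.log x) := by ring
    _ ≤ c * x := h1

private lemma aux_one_lo :
    (fun _ : ℝ => (1:ℝ)) =o[atTop] (fun x : ℝ => x / Real.log x) := by
  refine Asymptotics.IsBigO.trans_isLittleO ?_
    (aux_rpow_log_lo (by norm_num : (1:ℝ)/2 < 1))
  rw [Asymptotics.isBigO_iff]
  refine ⟨1, ?_⟩
  filter_upwards [eventually_ge_atTop (3:ℝ)] with x hx3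
  have hx0 : (0:ℝ) < x := by linarith
  have hL : (1:ℝ) ≤ Real.log x := aux_log_ge_one hx3
  have hb : (1:ℝ) ≤ x ^ ((1:ℝ)/2) := Real.one_le_rpow (by linarith) (by norm_num)
  rw [Real.norm_eq_abs, Real.norm_eq_abs, abs_of_nonneg (by norm_num : (0:ℝ) ≤ 1),
    abs_of_nonneg (by positivity)]
  nlinarith

/-- The number of primes `p ≤ x` satisfying the predicate `Q`. -/
noncomputable def primeCountSat (x : ℝ) (Q : ℕ → Prop) : ℕ :=
  ((Finset.range (⌊x⌋₊ + 1)).filter fun p : ℕ => p.Prime ∧ (p : ℝ) ≤ x ∧ Q p).card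

set_option maxHeartbeats 2000000 in
/-- Let `a` assign to every prime `p` an integer `a p` with `(a p)² < 4p`,
and let `r p`, `m p` be the (unique) positive integers with `m p` squarefree and
`4p - (a p)² = (r p)² * m p`.  Let `b` assign to every prime `p` a positive integer
`b p` dividing `r p`.  Assume:
(i) there is a constant `C > 0` such that for all reals `x ≥ 2` and all positive
integers `n`, `#{p prime ≤ x : n ∣ b p} ≤ C (x/(n³ log x) + √x log(n x))`; and
(ii) for every `ε > 0` there is a constant `Cε > 0` such that for all reals `x ≥ 2` and
all reals `1 ≤ y ≤ 2√x`,
`∑_{m squarefree, 1 ≤ m ≤ 4x/y²} #{p prime ≤ x : m(4p - (a p)²) is a perfect square}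
  ≤ Cε x^{13/7+ε} / y^{13/7}`.
Then for every positive-valued `f : ℝ → ℝ` with `f(x) → ∞` as `x → ∞`, one has
`#{p prime ≤ x : (b p)² > f(p)} = o(x / log x)` as `x → ∞`. -/
theorem stmt_13 (a : ℕ → ℤ) (ha : ∀ p : ℕ, p.Prime → (a p) ^ 2 < 4 * (p : ℤ))
    (r m : ℕ → ℕ)
    (hrm : ∀ p : ℕ, p.Prime → 0 < r p ∧ Squarefree (m p) ∧
      4 * (p : ℤ) - (a p) ^ 2 = ((r p : ℤ)) ^ 2 * (m p : ℤ))
    (b : ℕ → ℕ) (hb : ∀ p : ℕ, p.Prime → 0 < b p ∧ b p ∣ r p)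
    (hyp1 : ∃ C : ℝ, 0 < C ∧ ∀ x : ℝ, 2 ≤ x → ∀ n : ℕ, 0 < n →
      (primeCountSat x (fun p => n ∣ b p) : ℝ)
        ≤ C * (x / ((n : ℝ) ^ 3 * Real.log x) + Real.sqrt x * Real.log ((n : ℝ) * x)))
    (hyp2 : ∀ ε : ℝ, 0 < ε → ∃ Cε : ℝ, 0 < Cε ∧ ∀ x : ℝ, 2 ≤ x →
      ∀ y : ℝ, 1 ≤ y → y ≤ 2 * Real.sqrt x →
      (∑ m' ∈ (Finset.Icc 1 ⌊4 * x / y ^ 2⌋₊).filter Squarefree,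
          (primeCountSat x
            (fun p => IsSquare ((m' : ℤ) * (4 * (p : ℤ) - (a p) ^ 2))) : ℝ))
        ≤ Cε * x ^ ((13 : ℝ) / 7 + ε) / y ^ ((13 : ℝ) / 7)) :
    ∀ f : ℝ → ℝ, (∀ x, 0 < f x) → Tendsto f atTop atTop →
      (fun x : ℝ => (primeCountSat x (fun p => f p < ((b p) ^ 2 : ℝ)) : ℝ))
        =o[atTop] (fun x : ℝ => x / Real.log x) := by
  obtain ⟨C, hC, h1⟩ := hyp1
  obtain ⟨Cε, hCε, h2⟩ := hyp2 (1/100) (by norm_num)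
  intro f hfpos hf
  rw [Asymptotics.isLittleO_iff]
  intro c hc
  -- choose N
  obtain ⟨N, hN⟩ := exists_nat_gt (max 1 (4 * C / c))
  have hN1 : 1 ≤ N := by
    have h := (le_max_left 1 (4 * C / c)).trans_lt hN
    exact_mod_cast h.le
  have hNc : C * (2 / ((N : ℝ) + 1)) ≤ c / 2 := by
    have h4 : 4 * C / c < N := (le_max_right _ _).trans_lt hN
    rw [div_lt_iff₀ hc] at h4
    have hN0 : (0 : ℝ) < (N : ℝ) + 1 := by positivity
    rw [show C * (2 / ((N : ℝ) + 1)) = 2 * C / ((N : ℝ) + 1) by ring,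
      div_le_div_iff₀ hN0 (by norm_num : (0:ℝ) < 2)]
    nlinarith [hc.le, (Nat.cast_nonneg N : (0:ℝ) ≤ (N : ℝ))]
  -- choose z
  obtain ⟨z, hz⟩ := eventually_atTop.1 (hf.eventually_ge_atTop (((N : ℝ)) ^ 2))
  set z₀ : ℕ := ⌈z⌉₊ with hz₀def
  -- little-o remainder
  have hR : (fun x : ℝ => (z₀ : ℝ) * 1 + 2 * C * (x ^ ((49:ℝ)/50) * Real.log x)
      + Cε * (x ^ ((683:ℝ)/700) * Real.log x)) =o[atTop]
      (fun x : ℝ => x / Real.log x) := by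
    refine Asymptotics.IsLittleO.add (Asymptotics.IsLittleO.add ?_ ?_) ?_
    · exact aux_one_lo.const_mul_left _
    · exact (aux_rpow_log_lo (by norm_num)).const_mul_left _
    · exact (aux_rpow_log_lo (by norm_num)).const_mul_left _
  have hRe := Asymptotics.isLittleO_iff.1 hR (half_pos hc)
  filter_upwards [hRe, eventually_ge_atTop (3:ℝ)] with x hRx hx3
  have hx0 : (0:ℝ) < x := by linarith
  have hx2 : (2:ℝ) ≤ x := by linarith
  have hL1 : (1:ℝ) ≤ Real.log x := aux_log_ge_one hx3
  have hL0 : (0:ℝ) < Real.log x := by linarith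
  set y : ℝ := x ^ ((12:ℝ)/25) with hydef
  have hy1 : (1:ℝ) ≤ y := Real.one_le_rpow (by linarith) (by norm_num)
  have hy0 : (0:ℝ) < y := by linarith
  set M : ℕ := ⌊y⌋₊ with hMdef
  set K : ℕ := ⌊4 * x / y ^ 2⌋₊ with hKdef
  -- the combinatorial bound
  have key : (primeCountSat x (fun p => f p < ((b p) ^ 2 : ℝ))) ≤
      z₀ + (∑ n ∈ Finset.Ioc N M, primeCountSat x (fun p => n ∣ b p))
        + ∑ m' ∈ (Finset.Icc 1 K).filter Squarefree,
            primeCountSat x (fun p => IsSquare ((m' : ℤ) * (4 * (p : ℤ) - (a p) ^ 2))) := by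
    have hsub : ((Finset.range (⌊x⌋₊ + 1)).filter fun p : ℕ =>
          p.Prime ∧ (p : ℝ) ≤ x ∧ f p < ((b p) ^ 2 : ℝ)) ⊆
        ((Finset.range z₀ ∪ (Finset.Ioc N M).biUnion fun n =>
            (Finset.range (⌊x⌋₊ + 1)).filter fun p : ℕ =>
              p.Prime ∧ (p : ℝ) ≤ x ∧ n ∣ b p)
          ∪ ((Finset.Icc 1 K).filter Squarefree).biUnion fun m' =>
            (Finset.range (⌊x⌋₊ + 1)).filter fun p : ℕ =>
              p.Prime ∧ (p : ℝ) ≤ x ∧ IsSquare ((m' : ℤ) * (4 * (p : ℤ) - (a p) ^ 2))) := by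
      intro p hp
      simp only [Finset.mem_filter, Finset.mem_range] at hp
      obtain ⟨hpmem, hppr, hpx, hfp⟩ := hp
      by_cases hpz : p < z₀
      · exact Finset.mem_union_left _ (Finset.mem_union_left _ (Finset.mem_range.2 hpz))
      push_neg at hpz
      have hzp : z ≤ (p : ℝ) := le_trans (Nat.le_ceil z) (by exact_mod_cast hpz)
      have hfN : ((N : ℝ)) ^ 2 ≤ f p := hz p hzp
      have hNb : N < b p := by
        have h' : ((N : ℝ)) < ((b p : ℝ)) :=
          lt_of_pow_lt_pow_left₀ 2 (Nat.cast_nonneg _) (lt_of_le_of_lt hfN hfp)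
        exact_mod_cast h'
      obtain ⟨hr0, hsf, heq⟩ := hrm p hppr
      obtain ⟨hb0, hbr⟩ := hb p hppr
      by_cases hbM : b p ≤ M
      · refine Finset.mem_union_left _ (Finset.mem_union_right _ ?_)
        refine Finset.mem_biUnion.2 ⟨b p, Finset.mem_Ioc.2 ⟨hNb, hbM⟩, ?_⟩
        exact Finset.mem_filter.2 ⟨Finset.mem_range.2 hpmem, hppr, hpx, dvd_refl _⟩
      · push_neg at hbM
        refine Finset.mem_union_right _ ?_
        have hbrle : b p ≤ r p := Nat.le_of_dvd hr0 hbr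
        have hyb : y < (b p : ℝ) := (Nat.floor_lt hy0.le).1 hbM
        have hyr : y ≤ (r p : ℝ) := le_trans hyb.le (by exact_mod_cast hbrle)
        have heqR : 4 * (p : ℝ) - ((a p : ℝ)) ^ 2 = ((r p : ℝ)) ^ 2 * ((m p : ℝ)) := by
          exact_mod_cast heq
        have hm1 : 1 ≤ m p := Nat.one_le_iff_ne_zero.2 hsf.ne_zero
        have hmx : (m p : ℝ) * y ^ 2 ≤ 4 * x := by
          have h1' : (m p : ℝ) * y ^ 2 ≤ (m p : ℝ) * ((r p : ℝ)) ^ 2 :=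
            mul_le_mul_of_nonneg_left (pow_le_pow_left₀ hy0.le hyr 2) (Nat.cast_nonneg _)
          have h2' : (m p : ℝ) * ((r p : ℝ)) ^ 2 ≤ 4 * x := by
            nlinarith [sq_nonneg ((a p : ℝ))]
          linarith
        have hmK : m p ≤ K := by
          rw [hKdef]
          exact Nat.le_floor (by rw [le_div_iff₀ (by positivity)]; exact hmx)
        refine Finset.mem_biUnion.2
          ⟨m p, Finset.mem_filter.2 ⟨Finset.mem_Icc.2 ⟨hm1, hmK⟩, hsf⟩, ?_⟩
        refine Finset.mem_filter.2 ⟨Finset.mem_range.2 hpmem, hppr, hpx, ?_⟩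
        exact ⟨(r p : ℤ) * (m p : ℤ), by rw [heq]; ring⟩
    have e1 : primeCountSat x (fun p => f p < ((b p) ^ 2 : ℝ)) =
        ((Finset.range (⌊x⌋₊ + 1)).filter fun p : ℕ =>
          p.Prime ∧ (p : ℝ) ≤ x ∧ f p < ((b p) ^ 2 : ℝ)).card := by
      unfold primeCountSat
      refine congrArg Finset.card ?_
      ext p
      simp [Finset.mem_filter]
    have e2 : ∀ n : ℕ, primeCountSat x (fun p => n ∣ b p) =
        ((Finset.range (⌊x⌋₊ + 1)).filter fun p : ℕ =>
          p.Prime ∧ (p : ℝ) ≤ x ∧ n ∣ b p).card := by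
      intro n
      unfold primeCountSat
      refine congrArg Finset.card ?_
      ext p
      simp [Finset.mem_filter]
    have e3 : ∀ m' : ℕ, primeCountSat x
          (fun p => IsSquare ((m' : ℤ) * (4 * (p : ℤ) - (a p) ^ 2))) =
        ((Finset.range (⌊x⌋₊ + 1)).filter fun p : ℕ =>
          p.Prime ∧ (p : ℝ) ≤ x ∧ IsSquare ((m' : ℤ) * (4 * (p : ℤ) - (a p) ^ 2))).card := by
      intro m'
      unfold primeCountSat
      refine congrArg Finset.card ?_
      ext p
      simp [Finset.mem_filter]
    rw [e1]
    simp only [e2, e3]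
    refine le_trans (Finset.card_le_card hsub) (le_trans (Finset.card_union_le _ _)
      (add_le_add (le_trans (Finset.card_union_le _ _)
        (add_le_add (Finset.card_range z₀).le Finset.card_biUnion_le))
        Finset.card_biUnion_le))
  have keyR : ((primeCountSat x fun p => f p < ((b p) ^ 2 : ℝ)) : ℝ) ≤
      (z₀ : ℝ) + (∑ n ∈ Finset.Ioc N M, ((primeCountSat x fun p => n ∣ b p) : ℝ))
        + ∑ m' ∈ (Finset.Icc 1 K).filter Squarefree,
            ((primeCountSat x fun p => IsSquare ((m' : ℤ) * (4 * (p : ℤ) - (a p) ^ 2))) : ℝ) := by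
    exact_mod_cast key
  -- bound the first sum
  have hM1 : (1:ℝ) ≤ (M : ℝ) := by
    have : 1 ≤ M := Nat.le_floor (by exact_mod_cast hy1)
    exact_mod_cast this
  have hMy : (M : ℝ) ≤ y := Nat.floor_le hy0.le
  have hyx : y ≤ x := by
    have := Real.rpow_le_rpow_of_exponent_le (by linarith : 1 ≤ x)
      (by norm_num : (12:ℝ)/25 ≤ 1)
    rwa [Real.rpow_one] at this
  have hlogMx : Real.log ((M : ℝ) * x) ≤ 2 * Real.log x := by
    have h0 : (0:ℝ) < (M : ℝ) * x := by positivity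
    have h1' : (M : ℝ) * x ≤ x * x := by nlinarith
    calc Real.log ((M : ℝ) * x) ≤ Real.log (x * x) := Real.log_le_log h0 h1'
      _ = 2 * Real.log x := by rw [Real.log_mul hx0.ne' hx0.ne']; ring
  have hsqrt : Real.sqrt x = x ^ ((1:ℝ)/2) := Real.sqrt_eq_rpow x
  have hyx12 : y * x ^ ((1:ℝ)/2) = x ^ ((49:ℝ)/50) := by
    rw [hydef, ← Real.rpow_add hx0]
    norm_num
  have hsum1 : (∑ n ∈ Finset.Ioc N M, ((primeCountSat x fun p => n ∣ b p) : ℝ))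
      ≤ c / 2 * (x / Real.log x) + 2 * C * (x ^ ((49:ℝ)/50) * Real.log x) := by
    have hstep : ∀ n ∈ Finset.Ioc N M, ((primeCountSat x fun p => n ∣ b p) : ℝ)
        ≤ C * (x / Real.log x) * (((n : ℝ) ^ 2)⁻¹)
          + C * (Real.sqrt x * Real.log ((M : ℝ) * x)) := by
      intro n hn
      obtain ⟨hn1, hn2⟩ := Finset.mem_Ioc.1 hn
      have hn0 : 0 < n := lt_of_le_of_lt (Nat.zero_le N) hn1
      have hnR : (1:ℝ) ≤ (n : ℝ) := by exact_mod_cast hn0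
      refine le_trans (h1 x hx2 n hn0) ?_
      rw [mul_add]
      have e1' : C * (x / ((n : ℝ) ^ 3 * Real.log x))
          ≤ C * (x / Real.log x) * (((n : ℝ) ^ 2)⁻¹) := by
        rw [mul_comm ((n : ℝ) ^ 3) (Real.log x), ← div_div,
          div_eq_mul_inv (x / Real.log x), ← mul_assoc]
        refine mul_le_mul_of_nonneg_left ?_ (by positivity)
        exact inv_anti₀ (by positivity) (by nlinarith)
      have e2' : C * (Real.sqrt x * Real.log ((n : ℝ) * x))
          ≤ C * (Real.sqrt x * Real.log ((M : ℝ) * x)) := by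
        refine mul_le_mul_of_nonneg_left
          (mul_le_mul_of_nonneg_left ?_ (Real.sqrt_nonneg x)) hC.le
        refine Real.log_le_log (by positivity) ?_
        have : (n : ℝ) ≤ (M : ℝ) := by exact_mod_cast hn2
        nlinarith
      exact add_le_add e1' e2'
    refine le_trans (Finset.sum_le_sum hstep) ?_
    rw [Finset.sum_add_distrib, ← Finset.mul_sum, Finset.sum_const, nsmul_eq_mul]
    have hpart1 : C * (x / Real.log x) * (∑ n ∈ Finset.Ioc N M, ((n : ℝ) ^ 2)⁻¹)
        ≤ c / 2 * (x / Real.log x) := by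
      have htail : (∑ n ∈ Finset.Ioc N M, ((n : ℝ) ^ 2)⁻¹) ≤ 2 / ((N : ℝ) + 1) := by
        refine le_trans (Finset.sum_le_sum_of_subset_of_nonneg ?_
          (fun i _ _ => by positivity)) (sum_Ioo_inv_sq_le (α := ℝ) N (M + 1))
        intro i hi
        simp only [Finset.mem_Ioc, Finset.mem_Ioo] at hi ⊢
        omega
      have hxL : (0:ℝ) ≤ x / Real.log x := by positivity
      calc C * (x / Real.log x) * (∑ n ∈ Finset.Ioc N M, ((n : ℝ) ^ 2)⁻¹)
          ≤ C * (x / Real.log x) * (2 / ((N : ℝ) + 1)) := by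
            refine mul_le_mul_of_nonneg_left htail (by positivity)
        _ = (x / Real.log x) * (C * (2 / ((N : ℝ) + 1))) := by ring
        _ ≤ (x / Real.log x) * (c / 2) := mul_le_mul_of_nonneg_left hNc hxL
        _ = c / 2 * (x / Real.log x) := by ring
    have hpart2 : ((Finset.Ioc N M).card : ℝ) * (C * (Real.sqrt x * Real.log ((M : ℝ) * x)))
        ≤ 2 * C * (x ^ ((49:ℝ)/50) * Real.log x) := by
      have hcard : ((Finset.Ioc N M).card : ℝ) ≤ (M : ℝ) := by
        rw [Nat.card_Ioc]
        exact_mod_cast Nat.sub_le M N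
      have hlogMx0 : 0 ≤ Real.log ((M : ℝ) * x) :=
        Real.log_nonneg (by nlinarith)
      have hs0 : (0:ℝ) ≤ Real.sqrt x := Real.sqrt_nonneg x
      have hMlog : ((Finset.Ioc N M).card : ℝ) * Real.log ((M : ℝ) * x)
          ≤ y * (2 * Real.log x) :=
        mul_le_mul (hcard.trans hMy) hlogMx hlogMx0 hy0.le
      calc ((Finset.Ioc N M).card : ℝ) * (C * (Real.sqrt x * Real.log ((M : ℝ) * x)))
          = (C * Real.sqrt x) * (((Finset.Ioc N M).card : ℝ) * Real.log ((M : ℝ) * x)) := by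
            ring
        _ ≤ (C * Real.sqrt x) * (y * (2 * Real.log x)) :=
            mul_le_mul_of_nonneg_left hMlog (by positivity)
        _ = 2 * C * ((y * x ^ ((1:ℝ)/2)) * Real.log x) := by rw [hsqrt]; ring
        _ = 2 * C * (x ^ ((49:ℝ)/50) * Real.log x) := by rw [hyx12]
    exact add_le_add hpart1 hpart2
  -- bound the second sum
  have hsum2 : (∑ m' ∈ (Finset.Icc 1 K).filter Squarefree,
        ((primeCountSat x fun p => IsSquare ((m' : ℤ) * (4 * (p : ℤ) - (a p) ^ 2))) : ℝ))
      ≤ Cε * (x ^ ((683:ℝ)/700) * Real.log x) := by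
    have hy2x : y ≤ 2 * Real.sqrt x := by
      rw [hsqrt]
      have h12 : y ≤ x ^ ((1:ℝ)/2) :=
        Real.rpow_le_rpow_of_exponent_le (by linarith) (by norm_num)
      nlinarith [Real.rpow_pos_of_pos hx0 ((1:ℝ)/2)]
    have hh := h2 x hx2 y hy1 hy2x
    rw [hKdef]
    refine le_trans hh ?_
    have hyv : y ^ ((13:ℝ)/7) = x ^ ((156:ℝ)/175) := by
      rw [hydef, ← Real.rpow_mul hx0.le]
      norm_num
    rw [hyv]
    have hfin : Cε * x ^ ((13:ℝ)/7 + 1/100) / x ^ ((156:ℝ)/175)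
        = Cε * x ^ ((683:ℝ)/700) := by
      rw [mul_div_assoc, ← Real.rpow_sub hx0]
      norm_num
    rw [hfin]
    have : x ^ ((683:ℝ)/700) ≤ x ^ ((683:ℝ)/700) * Real.log x :=
      le_mul_of_one_le_right (Real.rpow_pos_of_pos hx0 _).le hL1
    nlinarith [Real.rpow_pos_of_pos hx0 ((683:ℝ)/700)]
  -- conclusion
  have hxLnorm : ‖x / Real.log x‖ = x / Real.log x := by
    rw [Real.norm_eq_abs, abs_of_nonneg (by positivity)]
  rw [Real.norm_eq_abs, abs_of_nonneg (Nat.cast_nonneg _), hxLnorm]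
  have hRx' : (z₀ : ℝ) * 1 + 2 * C * (x ^ ((49:ℝ)/50) * Real.log x)
      + Cε * (x ^ ((683:ℝ)/700) * Real.log x) ≤ c / 2 * (x / Real.log x) := by
    calc (z₀ : ℝ) * 1 + 2 * C * (x ^ ((49:ℝ)/50) * Real.log x)
        + Cε * (x ^ ((683:ℝ)/700) * Real.log x)
        ≤ |(z₀ : ℝ) * 1 + 2 * C * (x ^ ((49:ℝ)/50) * Real.log x)
          + Cε * (x ^ ((683:ℝ)/700) * Real.log x)| := le_abs_self _
      _ = ‖(z₀ : ℝ) * 1 + 2 * C * (x ^ ((49:ℝ)/50) * Real.log x)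
          + Cε * (x ^ ((683:ℝ)/700) * Real.log x)‖ := (Real.norm_eq_abs _).symm
      _ ≤ c / 2 * ‖x / Real.log x‖ := hRx
      _ = c / 2 * (x / Real.log x) := by rw [hxLnorm]
  calc ((primeCountSat x fun p => f p < ((b p) ^ 2 : ℝ)) : ℝ)
      ≤ _ := keyR
    _ ≤ (z₀ : ℝ) + (c / 2 * (x / Real.log x) + 2 * C * (x ^ ((49:ℝ)/50) * Real.log x))
        + Cε * (x ^ ((683:ℝ)/700) * Real.log x) :=
        add_le_add (add_le_add le_rfl hsum1) hsum2
    _ = c / 2 * (x / Real.log x) + ((z₀ : ℝ) * 1 + 2 * C * (x ^ ((49:ℝ)/50) * Real.log x)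
        + Cε * (x ^ ((683:ℝ)/700) * Real.log x)) := by ring
    _ ≤ c / 2 * (x / Real.log x) + c / 2 * (x / Real.log x) := add_le_add le_rfl hRx'
    _ = c * (x / Real.log x) := by ring
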